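/- (Lemma 3.1: cube tilings give extremal metrics) With the setup of the previous statement, assume additionally that vol(s) = Σ_v s(v)³ = 1 (the volume of R) and that l_s(B₁,B̄₁) = h. Then for every metric m with positive volume, l_m(B₁,B̄₁)³ / vol(m) ≤ l_s(B₁,B̄₁)³ / vol(s) = h³; i.e., s is an extremal metric for (G, B₁, B̄₁). -/

import Mathlib

open MeasureTheory

noncomputable def gdist {V : Type*} (G : SimpleGraph V) (m : V → ℝ) (A B : Set V) : ℝ :=
  sInf {x : ℝ | ∃ u ∈ A, ∃ v ∈ B, ∃ w : G.Walk u v, x = (w.support.map m).sum}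

noncomputable def gvol {V : Type*} [Fintype V] (m : V → ℝ) : ℝ := ∑ v, m v ^ 3

lemma gdist_le_walk {V : Type*} (G : SimpleGraph V) (m : V → ℝ) (hm : ∀ v, 0 ≤ m v)
    {A B : Set V} {u w : V} (hu : u ∈ A) (hw : w ∈ B) (p : G.Walk u w) :
    gdist G m A B ≤ (p.support.map m).sum := by
  apply csInf_le
  · refine ⟨0, fun x hx => ?_⟩
    obtain ⟨u', -, v', -, w', hx⟩ := hx
    subst hx
    exact List.sum_nonneg (by simp only [List.mem_map]; rintro y ⟨z, -, rfl⟩; exact hm z)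
  · exact ⟨u, hu, w, hw, p, rfl⟩

lemma gdist_nn {V : Type*} (G : SimpleGraph V) (m : V → ℝ) (hm : ∀ v, 0 ≤ m v)
    (A B : Set V) : 0 ≤ gdist G m A B := by
  apply Real.sInf_nonneg
  rintro x ⟨u', -, v', -, w', rfl⟩
  exact List.sum_nonneg (by simp only [List.mem_map]; rintro y ⟨z, -, rfl⟩; exact hm z)

lemma young_cube {a b c : ℝ} (ha : 0 ≤ a) (hb : 0 ≤ b) (hc : 0 < c) :
    a * (b * b) ≤ a ^ 3 / (3 * c ^ 2) + (2 * c / 3) * b ^ 3 := by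
  rw [div_add' _ _ _ (by positivity), le_div_iff₀ (by positivity)]
  nlinarith [mul_nonneg (sq_nonneg (a - c * b)) (show (0:ℝ) ≤ a + 2 * (c * b) by positivity),
    sq_nonneg c, mul_pos hc hc]

/-- Lemma 3.1: cube tilings give extremal metrics. If the edge-length function `s`
of a cube tiling of `R = [0,√h⁻¹]² × [0,h]` has unit volume and `l_s(B₁,B̄₁) = h`,
then `s` is extremal for `(G,B₁,B̄₁)`. -/
theorem stmt11 {V : Type*} [Fintype V] (G : SimpleGraph V)
    (B₁ B₂ : Set V) (h₁ : B₁.Nonempty) (h₂ : B₂.Nonempty)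
    (h : ℝ) (hh : 0 < h) (a : V → (Fin 3 → ℝ)) (s : V → ℝ) (hs : ∀ v, 0 ≤ s v)
    (huni : (⋃ v, Set.Icc (a v) (a v + fun _ => s v))
      = Set.Icc (0 : Fin 3 → ℝ) ![Real.sqrt h⁻¹, Real.sqrt h⁻¹, h])
    (hdisj : ∀ u v : V, u ≠ v →
      Disjoint (interior (Set.Icc (a u) (a u + fun _ => s u)))
        (interior (Set.Icc (a v) (a v + fun _ => s v))))
    (hline : ∀ t₁ ∈ Set.Icc (0 : ℝ) (Real.sqrt h⁻¹), ∀ t₂ ∈ Set.Icc (0 : ℝ) (Real.sqrt h⁻¹),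
      ∃ u ∈ B₁, ∃ w ∈ B₂, ∃ p : G.Walk u w, ∀ x ∈ p.support,
        ∃ q : Fin 3 → ℝ, q 0 = t₁ ∧ q 1 = t₂ ∧ q ∈ Set.Icc (a x) (a x + fun _ => s x))
    (hvols : gvol s = 1) (hls : gdist G s B₁ B₂ = h) :
    (gdist G s B₁ B₂) ^ 3 / gvol s = h ^ 3 ∧
      ∀ m : V → ℝ, (∀ v, 0 ≤ m v) → 0 < gvol m →
        (gdist G m B₁ B₂) ^ 3 / gvol m ≤ (gdist G s B₁ B₂) ^ 3 / gvol s := by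
  classical
  have hinv : (0:ℝ) ≤ h⁻¹ := by positivity
  have hsq0 : (0:ℝ) ≤ Real.sqrt h⁻¹ := Real.sqrt_nonneg _
  have hsqrt : Real.sqrt h⁻¹ * Real.sqrt h⁻¹ = h⁻¹ := Real.mul_self_sqrt hinv
  refine ⟨by rw [hls, hvols, div_one], ?_⟩
  intro m hm hvm
  rw [hls, hvols, div_one]
  -- the base square and projected rectangles
  set Sq : Set (ℝ × ℝ) := Set.Icc (0, 0) (Real.sqrt h⁻¹, Real.sqrt h⁻¹) with hSqdef
  set rect : V → Set (ℝ × ℝ) :=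
    fun v => Set.Icc (a v 0, a v 1) (a v 0 + s v, a v 1 + s v) with hrectdef
  set f : ℝ × ℝ → ℝ := fun t => ∑ v, (rect v).indicator (fun _ => m v) t with hfdef
  have hvolrect : ∀ v, (volume (rect v)).toReal = s v * s v := by
    intro v
    simp only [hrectdef]
    rw [Set.Icc_prod_eq, Measure.volume_eq_prod, Measure.prod_prod]
    simp only [Real.volume_Icc, add_sub_cancel_left]
    rw [← ENNReal.ofReal_mul (hs v), ENNReal.toReal_ofReal (mul_nonneg (hs v) (hs v))]
  have hfint : Integrable f := by
    apply integrable_finset_sum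
    intro v _
    rw [integrable_indicator_iff measurableSet_Icc]
    exact integrableOn_const isCompact_Icc.measure_lt_top.ne
  have hfnn : ∀ t, 0 ≤ f t := fun t =>
    Finset.sum_nonneg fun v _ => Set.indicator_nonneg (fun _ _ => hm v) t
  have hfintegral : ∫ t, f t = ∑ v, m v * (s v * s v) := by
    rw [hfdef, integral_finset_sum _ (fun v _ => by
      rw [integrable_indicator_iff measurableSet_Icc]
      exact integrableOn_const isCompact_Icc.measure_lt_top.ne)]
    refine Finset.sum_congr rfl fun v _ => ?_
    rw [integral_indicator_const _ measurableSet_Icc, smul_eq_mul, measureReal_def, hvolrect v, mul_comm]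
  -- pointwise bound on the square
  have hpt : ∀ t ∈ Sq, gdist G m B₁ B₂ ≤ f t := by
    intro t ht
    rw [hSqdef, Set.mem_Icc, Prod.le_def, Prod.le_def] at ht
    obtain ⟨u, hu, w, hw, p, hp⟩ :=
      hline t.1 ⟨ht.1.1, ht.2.1⟩ t.2 ⟨ht.1.2, ht.2.2⟩
    have hsub := p.support_toPath_subset
    have hnd : (p.toPath : G.Walk u w).support.Nodup := p.toPath.2.support_nodup
    refine le_trans (gdist_le_walk G m hm hu hw (p.toPath : G.Walk u w)) ?_
    rw [← List.sum_toFinset m hnd]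
    have hmem : ∀ x ∈ (p.toPath : G.Walk u w).support.toFinset, t ∈ rect x := by
      intro x hx
      rw [List.mem_toFinset] at hx
      obtain ⟨q, hq0, hq1, hqa, hqb⟩ := hp x (hsub hx)
      have ha0 : a x 0 ≤ q 0 := hqa 0
      have ha1 : a x 1 ≤ q 1 := hqa 1
      have hb0 : q 0 ≤ a x 0 + s x := hqb 0
      have hb1 : q 1 ≤ a x 1 + s x := hqb 1
      rw [hq0] at ha0 hb0; rw [hq1] at ha1 hb1
      exact Set.mem_Icc.2 ⟨⟨ha0, ha1⟩, ⟨hb0, hb1⟩⟩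
    calc ∑ x ∈ (p.toPath : G.Walk u w).support.toFinset, m x
        = ∑ x ∈ (p.toPath : G.Walk u w).support.toFinset,
            (rect x).indicator (fun _ => m x) t :=
          Finset.sum_congr rfl fun x hx => (Set.indicator_of_mem (hmem x hx) (fun _ => m x)).symm
      _ ≤ f t := Finset.sum_le_sum_of_subset_of_nonneg (Finset.subset_univ _)
          (fun v _ _ => Set.indicator_nonneg (fun _ _ => hm v) t)
  -- averaging inequality
  have hvolSq : (volume Sq).toReal = h⁻¹ := by
    rw [hSqdef]
    rw [Set.Icc_prod_eq, Measure.volume_eq_prod, Measure.prod_prod]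
    simp only [Real.volume_Icc, sub_zero]
    rw [← ENNReal.ofReal_mul hsq0, ENNReal.toReal_ofReal (by positivity), hsqrt]
  have havg : h⁻¹ * gdist G m B₁ B₂ ≤ ∑ v, m v * (s v * s v) := by
    calc h⁻¹ * gdist G m B₁ B₂
        = ∫ _ in Sq, gdist G m B₁ B₂ := by
          rw [setIntegral_const, smul_eq_mul, measureReal_def, hvolSq]
      _ ≤ ∫ t in Sq, f t := by
          refine setIntegral_mono_on (integrableOn_const ?_) hfint.integrableOn
            measurableSet_Icc hpt
          exact isCompact_Icc.measure_lt_top.ne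
      _ ≤ ∫ t, f t := setIntegral_le_integral hfint (Filter.Eventually.of_forall hfnn)
      _ = ∑ v, m v * (s v * s v) := hfintegral
  -- Hölder via Young's inequality
  set A : ℝ := gvol m ^ ((1:ℝ)/3) with hAdef
  have hApos : 0 < A := Real.rpow_pos_of_pos hvm _
  have hA3 : A ^ 3 = gvol m := by
    rw [hAdef, ← Real.rpow_natCast (gvol m ^ ((1:ℝ)/3)) 3, ← Real.rpow_mul hvm.le]
    norm_num
  have hssum : ∑ v, s v ^ 3 = 1 := hvols
  have hholder : ∑ v, m v * (s v * s v) ≤ A := by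
    calc ∑ v, m v * (s v * s v)
        ≤ ∑ v, (m v ^ 3 / (3 * A ^ 2) + (2 * A / 3) * s v ^ 3) :=
          Finset.sum_le_sum fun v _ => young_cube (hm v) (hs v) hApos
      _ = gvol m / (3 * A ^ 2) + (2 * A / 3) * ∑ v, s v ^ 3 := by
          rw [Finset.sum_add_distrib, ← Finset.sum_div, ← Finset.mul_sum]; rfl
      _ = A := by
          rw [hssum, ← hA3]; field_simp; ring
  -- conclude
  have hge0 : 0 ≤ gdist G m B₁ B₂ := gdist_nn G m hm B₁ B₂
  have hle : gdist G m B₁ B₂ ≤ h * A := by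
    have := mul_le_mul_of_nonneg_left (havg.trans hholder) hh.le
    rwa [← mul_assoc, mul_inv_cancel₀ hh.ne', one_mul] at this
  rw [div_le_iff₀ hvm, ← hA3, ← mul_pow]
  exact pow_le_pow_left₀ hge0 hle 3
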